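/- Suppose h₀, h∞ ∈ H satisfy (I − P∘R∘P∘R)h∞ = h₀ and P h₀ = 0. Then ‖Q(R h∞) − Q(R(Q(R h∞)))‖² = ‖h∞‖² + ‖h₀‖² − ‖P(R(P(R h∞)))‖² − 2 Re⟨h₀, R(P(R h∞)) + R h∞⟩. -/

import Mathlib

/-- If `(I − P∘R∘P∘R) h∞ = h₀` and `P h₀ = 0` then, with `Q = I − P`,
`‖Q(R h∞) − Q(R(Q(R h∞)))‖² = ‖h∞‖² + ‖h₀‖² − ‖P(R(P(R h∞)))‖²
  − 2 Re⟨h₀, R(P(R h∞)) + R h∞⟩`. -/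
theorem stmt15 {H : Type*} [NormedAddCommGroup H] [InnerProductSpace ℂ H] [CompleteSpace H]
    (R P : H →L[ℂ] H)
    (hR : IsSelfAdjoint R) (hR2 : R ∘L R = 1)
    (hP : IsSelfAdjoint P) (hP2 : P ∘L P = P)
    (h₀ hinf : H)
    (heq : ((1 : H →L[ℂ] H) - P ∘L R ∘L P ∘L R) hinf = h₀)
    (hh₀ : P h₀ = 0) :
    ‖((1 : H →L[ℂ] H) - P) (R hinf) -
        ((1 : H →L[ℂ] H) - P) (R (((1 : H →L[ℂ] H) - P) (R hinf)))‖ ^ 2 =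
      ‖hinf‖ ^ 2 + ‖h₀‖ ^ 2 - ‖P (R (P (R hinf)))‖ ^ 2 -
        2 * (inner ℂ h₀ (R (P (R hinf)) + R hinf) : ℂ).re := by
  subst heq
  have hRR : ∀ a : H, R (R a) = a := fun a => by
    have := DFunLike.congr_fun hR2 a
    simpa using this
  have hPP : ∀ a : H, P (P a) = P a := fun a => by
    have := DFunLike.congr_fun hP2 a
    simpa using this
  have cR : ∀ a b : H, (inner ℂ (R a) b : ℂ) = inner ℂ a (R b) := fun a b => by
    conv_lhs => rw [← hR.adjoint_eq]
    exact ContinuousLinearMap.adjoint_inner_left R b a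
  have cP : ∀ a b : H, (inner ℂ (P a) b : ℂ) = inner ℂ a (P b) := fun a b => by
    conv_lhs => rw [← hP.adjoint_eq]
    exact ContinuousLinearMap.adjoint_inner_left P b a
  simp only [ContinuousLinearMap.sub_apply, ContinuousLinearMap.one_apply,
    ContinuousLinearMap.comp_apply] at hh₀ ⊢
  have hPinf : P hinf = P (R (P (R hinf))) := by
    have h1 : P hinf - P (P (R (P (R hinf)))) = 0 := by rw [← map_sub]; exact hh₀
    rw [hPP] at h1
    exact sub_eq_zero.mp h1
  have hvec : R hinf - P (R hinf) -
      (R (R hinf - P (R hinf)) - P (R (R hinf - P (R hinf)))) =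
      (R hinf + R (P (R hinf))) - (hinf + P (R hinf)) := by
    simp only [map_sub, hRR, ← hPinf]
    abel
  rw [hvec, norm_sub_sq (𝕜 := ℂ), norm_add_sq (𝕜 := ℂ), norm_add_sq (𝕜 := ℂ),
    norm_sub_sq (𝕜 := ℂ)]
  simp only [inner_add_left, inner_add_right, inner_sub_left, inner_sub_right, map_add, map_sub,
    Complex.add_re, Complex.sub_re, RCLike.re_to_complex]
  have sym : ∀ a b : H, (inner ℂ a b : ℂ).re = (inner ℂ b a : ℂ).re := fun a b => by
    rw [← inner_conj_symm a b, Complex.conj_re]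
  have nsq : ∀ a : H, ‖a‖ ^ 2 = (inner ℂ a a : ℂ).re := fun a => by
    rw [norm_sq_eq_re_inner (𝕜 := ℂ)]; rfl
  have nR : ∀ a : H, ‖R a‖ ^ 2 = ‖a‖ ^ 2 := fun a => by
    rw [nsq, nsq, cR, hRR]
  have e4 : (inner ℂ (R hinf) (P (R hinf)) : ℂ) = inner ℂ (P (R hinf)) (P (R hinf)) := by
    conv_lhs => rw [← hPP (R hinf), ← cP]
  have e1 : (inner ℂ (R hinf) (R (P (R hinf))) : ℂ) = inner ℂ hinf (P (R hinf)) := by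
    rw [cR, hRR]
  have e3 : (inner ℂ (R (P (R hinf))) hinf : ℂ).re = ‖P (R hinf)‖ ^ 2 := by
    rw [cR, cP, sym, sym _ (R hinf), e4, nsq]
  have e5 : (inner ℂ (R (P (R hinf))) (P (R hinf)) : ℂ).re
      = (inner ℂ hinf (P (R hinf)) : ℂ).re := by
    rw [cR, cP, ← hPinf, sym, cP]
  have e7 : (inner ℂ hinf (P (R (P (R hinf)))) : ℂ).re = ‖P (R (P (R hinf)))‖ ^ 2 := by
    rw [← hPinf, ← hPP hinf, sym, cP, hPP, hPinf, nsq]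
  have e8 : (inner ℂ hinf (R (P (R hinf))) : ℂ).re = ‖P (R hinf)‖ ^ 2 := by
    rw [sym, e3]
  have e9 : (inner ℂ (P (R (P (R hinf)))) (R (P (R hinf))) : ℂ).re
      = ‖P (R (P (R hinf)))‖ ^ 2 := by
    conv_lhs => rw [← hPP (R (P (R hinf)))]
    rw [cP]
    exact (nsq _).symm
  have e11 : (inner ℂ (P (R (P (R hinf)))) (R hinf) : ℂ).re
      = (inner ℂ hinf (P (R hinf)) : ℂ).re := by
    rw [cP, e5]
  rw [nR, nR, e1, e3, e4, e5, e7, e8, e9, e11, nsq (P (R hinf)), sym (R hinf) hinf]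
  ring
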